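/- The Kreisel–Putnam axiom (¬p → (q ∨ r)) → ((¬p → q) ∨ (¬p → r)) is valid in every Medvedev frame M_n. -/
import Mathlib


inductive Fml : Type where
  | atom : ℕ → Fml
  | bot  : Fml
  | and  : Fml → Fml → Fml
  | or   : Fml → Fml → Fml
  | imp  : Fml → Fml → Fml
deriving DecidableEq

/-- Intuitionistic negation: ¬φ := φ → ⊥. -/
def Fml.neg (φ : Fml) : Fml := .imp φ .bot

/-- Biconditional. -/
def Fml.iff (φ ψ : Fml) : Fml := .and (.imp φ ψ) (.imp ψ φ)

/-- Disjunction of a list of formulas (empty disjunction is ⊥). -/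
def disj : List Fml → Fml
  | [] => .bot
  | [φ] => φ
  | φ :: l => .or φ (disj l)

/-- Conjunction of a list of formulas (empty conjunction is ¬⊥). -/
def conj : List Fml → Fml
  | [] => Fml.neg .bot
  | [φ] => φ
  | φ :: l => .and φ (conj l)

/-- Substitution, extended homomorphically. -/
def Fml.subst (σ : ℕ → Fml) : Fml → Fml
  | .atom p => σ p
  | .bot => .bot
  | .and φ ψ => .and (φ.subst σ) (ψ.subst σ)
  | .or φ ψ => .or (φ.subst σ) (ψ.subst σ)
  | .imp φ ψ => .imp (φ.subst σ) (ψ.subst σ)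

/-- Hilbert-style provability for intuitionistic logic plus extra axioms `Ax`. -/
inductive Prov (Ax : Fml → Prop) : Fml → Prop where
  | ax {φ} : Ax φ → Prov Ax φ
  | k {φ ψ} : Prov Ax (.imp φ (.imp ψ φ))
  | s {φ ψ χ} : Prov Ax (.imp (.imp φ (.imp ψ χ)) (.imp (.imp φ ψ) (.imp φ χ)))
  | andI {φ ψ} : Prov Ax (.imp φ (.imp ψ (.and φ ψ)))
  | andE₁ {φ ψ} : Prov Ax (.imp (.and φ ψ) φ)
  | andE₂ {φ ψ} : Prov Ax (.imp (.and φ ψ) ψ)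
  | orI₁ {φ ψ} : Prov Ax (.imp φ (.or φ ψ))
  | orI₂ {φ ψ} : Prov Ax (.imp ψ (.or φ ψ))
  | orE {φ ψ χ} : Prov Ax (.imp (.imp φ χ) (.imp (.imp ψ χ) (.imp (.or φ ψ) χ)))
  | exfalso {φ} : Prov Ax (.imp .bot φ)
  | mp {φ ψ} : Prov Ax (.imp φ ψ) → Prov Ax φ → Prov Ax ψ

/-- No extra axioms: pure intuitionistic logic is `Prov NoAx`. -/
def NoAx : Fml → Prop := fun _ => False

/-- Instances of the weak Kreisel–Putnam axiom schema. -/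
def wKPAx : Fml → Prop := fun φ =>
  ∃ a b c : Fml, φ = .imp (.imp a.neg (.or b.neg c.neg))
    (.or (.imp a.neg b.neg) (.imp a.neg c.neg))

/-- Intuitionistic Kripke forcing over a preordered set of worlds. -/
def Force {W : Type} [Preorder W] (V : W → ℕ → Prop) : W → Fml → Prop
  | w, .atom p => V w p
  | _, .bot => False
  | w, .and φ ψ => Force V w φ ∧ Force V w ψ
  | w, .or φ ψ => Force V w φ ∨ Force V w ψ
  | w, .imp φ ψ => ∀ v, w ≤ v → Force V v φ → Force V v ψ

/-- A valuation is monotone (persistent). -/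
def MonoVal {W : Type} [Preorder W] (V : W → ℕ → Prop) : Prop :=
  ∀ ⦃w w'⦄, w ≤ w' → ∀ p, V w p → V w' p

/-- The Medvedev frame `M n`: nonempty subsets of `Fin n` ordered by reverse inclusion. -/
def Med (n : ℕ) : Type := {I : Finset (Fin n) // I.Nonempty}

instance {n : ℕ} : PartialOrder (Med n) where
  le I J := J.1 ⊆ I.1
  le_refl I := Finset.Subset.refl _
  le_trans I J K h h' := Finset.Subset.trans h' h
  le_antisymm I J h h' := Subtype.ext (Finset.Subset.antisymm h' h)

instance {n : ℕ} : DecidableEq (Med n) := Subtype.instDecidableEq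

/-- Validity on the Medvedev frame `M n`. -/
def MedValid (n : ℕ) (φ : Fml) : Prop :=
  ∀ V : Med n → ℕ → Prop, MonoVal V → ∀ w, Force V w φ

/-- Medvedev's logic of finite problems. -/
def ML (φ : Fml) : Prop := ∀ n, MedValid n φ

/-- The singleton world `{i}` of `M n`. -/
def single {n : ℕ} (i : Fin n) : Med n := ⟨{i}, Finset.singleton_nonempty i⟩

/-- Exponentiation on ℕ∞ (anything involving ∞ gives ∞). -/
def epow : ℕ∞ → ℕ∞ → ℕ∞
  | some a, some b => some (a ^ b)
  | _, _ => ⊤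

/-- Kreisel–Putnam rank. -/
def rank : Fml → ℕ∞
  | .imp _ .bot => 1
  | .or φ ψ => rank φ + rank ψ
  | .and φ ψ => rank φ * rank ψ
  | .imp φ ψ => epow (rank ψ) (rank φ)
  | _ => ⊤

/-- Disjunction of `α i` over a finite index set. -/
noncomputable def bigOrOn {n : ℕ} (α : Fin n → Fml) (I : Finset (Fin n)) : Fml :=
  disj (I.toList.map α)

/-- `α_I := ¬¬⋁_{i ∈ I} α_i`. -/
noncomputable def alphaF {n : ℕ} (α : Fin n → Fml) (I : Finset (Fin n)) : Fml :=
  Fml.neg (Fml.neg (bigOrOn α I))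

/-- The Kreisel–Putnam axiom
`(¬p → (q ∨ r)) → ((¬p → q) ∨ (¬p → r))` is valid in every Medvedev frame. -/
theorem stmt4 (n : ℕ) :
    MedValid n (.imp (.imp (Fml.atom 0).neg (.or (.atom 1) (.atom 2)))
      (.or (.imp (Fml.atom 0).neg (.atom 1)) (.imp (Fml.atom 0).neg (.atom 2)))) := by
  classical
  intro V hV w u hwu hu
  -- `T` : elements i of u whose singleton does not satisfy p
  set T : Finset (Fin n) := u.1.filter (fun i => ¬ V (single i) 0) with hTdef
  -- a world forces ¬p iff all its singletons fail p
  have key : ∀ v : Med n, (∀ v', v ≤ v' → Force V v' (Fml.atom 0) → False) →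
      ∀ i ∈ v.1, ¬ V (single i) 0 := by
    intro v hv i hi
    exact fun h => hv (single i) (Finset.singleton_subset_iff.mpr hi) h
  rcases T.eq_empty_or_nonempty with hT | hT
  · -- no successor of u forces ¬p
    left
    intro v huv hv
    exfalso
    obtain ⟨i, hi⟩ := v.2
    have hiu : i ∈ u.1 := huv hi
    have hiT : i ∉ T := by simp [hT]
    have hVp : V (single i) 0 := by
      by_contra h
      exact hiT (Finset.mem_filter.mpr ⟨hiu, h⟩)
    exact key v hv i hi hVp
  · set t : Med n := ⟨T, hT⟩ with htdef
    have hut : u ≤ t := Finset.filter_subset _ _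
    have ht : Force V t (Fml.neg (Fml.atom 0)) := by
      intro v' htv' hv'
      obtain ⟨i, hi⟩ := v'.2
      have hit : i ∈ T := htv' hi
      have : ¬ V (single i) 0 := (Finset.mem_filter.mp hit).2
      exact this (hV (show ({i} : Finset (Fin n)) ⊆ v'.1 from
        Finset.singleton_subset_iff.mpr hi) 0 hv')
    have hsub : ∀ v : Med n, u ≤ v →
        (∀ v', v ≤ v' → Force V v' (Fml.atom 0) → False) → t ≤ v := by
      intro v hvu hv i hi
      exact Finset.mem_filter.mpr ⟨hvu hi, key v hv i hi⟩
    rcases hu t hut ht with h1 | h2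
    · left
      intro v huv hv
      exact hV (hsub v huv hv) 1 h1
    · right
      intro v huv hv
      exact hV (hsub v huv hv) 2 h2
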